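/- There exists a finite three-player fixed-sum perfect-information game and a mixed-strategy subgame-perfect equilibrium f of it such that no pure strategy profile selecting actions in the supports of f is a pure-strategy subgame-perfect equilibrium; concretely, in the game G5 of the paper, the profile f = (L1; 0.5 L2 + 0.5 R2; 0.5 L3 + 0.5 R3) is a mixed SPE but no pure selection from its supports is an SPE. -/

import Mathlib

set_option linter.unusedVariables false

/-- A finite game tree with `n` players: each internal node is controlled by a
player in `Fin n` and has `k+1` children; leaves carry a payoff vector. -/
inductive GameTree (n : ℕ) : Type
  | leaf (u : Fin n → ℝ) : GameTree n
  | node (p : Fin n) (k : ℕ) (c : Fin (k + 1) → GameTree n) : GameTree n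

/-- A pure strategy profile: a choice of child at every internal node. -/
inductive PureProfile {n : ℕ} : GameTree n → Type
  | leaf {u : Fin n → ℝ} : PureProfile (.leaf u)
  | node {p : Fin n} {k : ℕ} {c : Fin (k + 1) → GameTree n}
      (ch : Fin (k + 1)) (sub : ∀ j, PureProfile (c j)) :
      PureProfile (.node p k c)

/-- The payoff vector induced by a pure strategy profile. -/
def payoff {n : ℕ} : {t : GameTree n} → PureProfile t → Fin n → ℝ
  | .leaf u, .leaf, i => u i
  | .node _ _ _, .node ch sub, i => payoff (sub ch) i

/-- `Dev i g g'` : `g'` is a unilateral deviation of `g` by player `i`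
(they agree at every node not controlled by `i`). -/
def Dev {n : ℕ} (i : Fin n) : {t : GameTree n} → PureProfile t → PureProfile t → Prop
  | .leaf _, _, _ => True
  | .node p _ _, .node ch sub, .node ch' sub' =>
      (p ≠ i → ch' = ch) ∧ ∀ j, Dev i (sub j) (sub' j)

/-- Subgame-perfect equilibrium for pure profiles: at every node, no player can
strictly improve her payoff in the subgame rooted there by a unilateral deviation. -/
def IsSPE {n : ℕ} : {t : GameTree n} → PureProfile t → Prop
  | .leaf _, _ => True
  | .node p k c, .node ch sub =>
      (∀ j, IsSPE (sub j)) ∧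
      ∀ (i : Fin n) (g' : PureProfile (.node p k c)),
        Dev i (.node ch sub) g' →
        payoff g' i ≤ payoff (PureProfile.node (p := p) ch sub) i

/-- A behavioral mixed strategy profile: a probability distribution over
children at every internal node. -/
inductive MixedProfile {n : ℕ} : GameTree n → Type
  | leaf {u : Fin n → ℝ} : MixedProfile (.leaf u)
  | node {p : Fin n} {k : ℕ} {c : Fin (k + 1) → GameTree n}
      (w : Fin (k + 1) → ℝ) (hw : ∀ j, 0 ≤ w j) (hsum : ∑ j, w j = 1)
      (sub : ∀ j, MixedProfile (c j)) :
      MixedProfile (.node p k c)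

/-- Expected payoff vector of a behavioral mixed strategy profile. -/
noncomputable def mpayoff {n : ℕ} : {t : GameTree n} → MixedProfile t → Fin n → ℝ
  | .leaf u, .leaf, i => u i
  | .node _ _ _, .node w _ _ sub, i => ∑ j, w j * mpayoff (sub j) i

/-- `MDev i f f'` : `f'` is a unilateral deviation of the mixed profile `f` by player `i`. -/
def MDev {n : ℕ} (i : Fin n) : {t : GameTree n} → MixedProfile t → MixedProfile t → Prop
  | .leaf _, _, _ => True
  | .node p _ _, .node w _ _ sub, .node w' _ _ sub' =>
      (p ≠ i → w' = w) ∧ ∀ j, MDev i (sub j) (sub' j)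

/-- Subgame-perfect equilibrium for behavioral mixed profiles. -/
noncomputable def MixedSPE {n : ℕ} : {t : GameTree n} → MixedProfile t → Prop
  | .leaf _, _ => True
  | .node p k c, .node w hw hs sub =>
      (∀ j, MixedSPE (sub j)) ∧
      ∀ (i : Fin n) (f' : MixedProfile (.node p k c)),
        MDev i (MixedProfile.node (p := p) w hw hs sub) f' →
        mpayoff f' i ≤ mpayoff (MixedProfile.node (p := p) w hw hs sub) i

/-- `InSupport f g` : at every internal node, the pure profile `g` selects an
action lying in the support of the mixed action of `f` at that node. -/
def InSupport {n : ℕ} : {t : GameTree n} → MixedProfile t → PureProfile t → Prop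
  | .leaf _, _, _ => True
  | .node _ _ _, .node w _ _ msub, .node ch psub =>
      0 < w ch ∧ ∀ j, InSupport (msub j) (psub j)

/-- The payoffs of leaves of the game tree. -/
def IsLeafPayoff {n : ℕ} : GameTree n → (Fin n → ℝ) → Prop
  | .leaf u, v => u = v
  | .node _ _ c, v => ∃ j, IsLeafPayoff (c j) v

/-- Fixed-sum condition: at every leaf the payoffs sum to the constant `s`. -/
def FixedSum {n : ℕ} (t : GameTree n) (s : ℝ) : Prop :=
  ∀ v, IsLeafPayoff t v → ∑ i, v i = s

noncomputable def G5 : GameTree 3 :=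
  .node 0 1
    ![.node 1 1 ![.node 2 1 ![.leaf ![8, 0, 1], .leaf ![0, 8, 1]], .leaf ![2, 4, 3]],
      .leaf ![3, 3, 3]]

-- Auxiliary material

theorem payoff_leaf {n : ℕ} (u : Fin n → ℝ) (g : PureProfile (.leaf u)) (i : Fin n) :
    payoff g i = u i := by cases g; rfl

theorem mpayoff_leaf {n : ℕ} (u : Fin n → ℝ) (m : MixedProfile (.leaf u)) (i : Fin n) :
    mpayoff m i = u i := by cases m; rfl

theorem dev_refl {n : ℕ} (i : Fin n) {t : GameTree n} (g : PureProfile t) : Dev i g g := by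
  induction g with
  | leaf => trivial
  | node ch sub ih => exact ⟨fun _ => rfl, fun j => ih j⟩

noncomputable def T2 : GameTree 3 := .node 2 1 ![.leaf ![8, 0, 1], .leaf ![0, 8, 1]]
noncomputable def T1 : GameTree 3 := .node 1 1 ![T2, .leaf ![2, 4, 3]]

theorem hw_half : ∀ j : Fin 2, (0:ℝ) ≤ ![1/2, 1/2] j := by
  intro j; fin_cases j <;> norm_num

theorem hs_half : ∑ j : Fin 2, ![(1:ℝ)/2, 1/2] j = 1 := by
  simp [Fin.sum_univ_two]; norm_num

theorem hw_10 : ∀ j : Fin 2, (0:ℝ) ≤ ![1, 0] j := by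
  intro j; fin_cases j <;> norm_num

theorem hs_10 : ∑ j : Fin 2, ![(1:ℝ), 0] j = 1 := by
  simp [Fin.sum_univ_two]

noncomputable def F2 : MixedProfile T2 :=
  .node ![1/2, 1/2] hw_half hs_half
    (fun j => match j with
      | 0 => .leaf
      | 1 => .leaf)

noncomputable def F1 : MixedProfile T1 :=
  .node ![1/2, 1/2] hw_half hs_half
    (fun j => match j with
      | 0 => F2
      | 1 => .leaf)

noncomputable def F5 : MixedProfile G5 :=
  .node ![1, 0] hw_10 hs_10
    (fun j => match j with
      | 0 => F1
      | 1 => .leaf)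


theorem mdev_t2 (i : Fin 3) (m : MixedProfile T2) (h : MDev i F2 m) :
    mpayoff m i = ![4, 4, 1] i := by
  cases m with
  | node w hw hs sub =>
    obtain ⟨h1, h2⟩ := h
    have e : mpayoff (MixedProfile.node (p := 2) w hw hs sub) i
        = w 0 * ![(8:ℝ),0,1] i + w 1 * ![(0:ℝ),8,1] i := by
      show ∑ j : Fin 2, w j * mpayoff (sub j) i = _
      erw [Fin.sum_univ_two, mpayoff_leaf ![8,0,1] (sub 0), mpayoff_leaf ![0,8,1] (sub 1)]
    erw [e]
    have hsum : w 0 + w 1 = 1 := by rw [← Fin.sum_univ_two w]; exact hs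
    fin_cases i
    · rw [h1 (by decide)]; norm_num
    · rw [h1 (by decide)]; norm_num
    · simp; linarith


theorem mdev_refl {n : ℕ} (i : Fin n) {t : GameTree n} (m : MixedProfile t) : MDev i m m := by
  induction m with
  | leaf => trivial
  | node w hw hs sub ih => exact ⟨fun _ => rfl, fun j => ih j⟩

theorem mdev_t1 (i : Fin 3) (m : MixedProfile T1) (h : MDev i F1 m) :
    mpayoff m i = ![3, 4, 2] i := by
  cases m with
  | node w hw hs sub =>
    obtain ⟨h1, h2⟩ := h
    have e2 : mpayoff (sub 0) i = ![(4:ℝ),4,1] i := mdev_t2 i (sub 0) (h2 0)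
    have e : mpayoff (MixedProfile.node (p := 1) w hw hs sub) i
        = w 0 * ![(4:ℝ),4,1] i + w 1 * ![(2:ℝ),4,3] i := by
      show ∑ j : Fin 2, w j * mpayoff (sub j) i = _
      erw [Fin.sum_univ_two, e2, mpayoff_leaf ![2,4,3] (sub 1)]
    erw [e]
    have hsum : w 0 + w 1 = 1 := by rw [← Fin.sum_univ_two w]; exact hs
    fin_cases i
    · rw [h1 (by decide)]; norm_num
    · simp; linarith
    · rw [h1 (by decide)]; norm_num

theorem mspe_f2 : MixedSPE F2 := by
  refine ⟨?_, ?_⟩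
  · intro j; fin_cases j <;> trivial
  · intro i f' hdev
    show mpayoff f' i ≤ mpayoff F2 i
    rw [show mpayoff f' i = ![(4:ℝ),4,1] i from mdev_t2 i f' hdev,
      show mpayoff F2 i = ![(4:ℝ),4,1] i from mdev_t2 i F2 (mdev_refl i F2)]

theorem mspe_f1 : MixedSPE F1 := by
  refine ⟨?_, ?_⟩
  · intro j
    fin_cases j
    · exact mspe_f2
    · trivial
  · intro i f' hdev
    show mpayoff f' i ≤ mpayoff F1 i
    rw [show mpayoff f' i = ![(3:ℝ),4,2] i from mdev_t1 i f' hdev,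
      show mpayoff F1 i = ![(3:ℝ),4,2] i from mdev_t1 i F1 (mdev_refl i F1)]

theorem mpayoff_f5 (i : Fin 3) : mpayoff F5 i = ![3, 4, 2] i := by
  have e1 : mpayoff F1 i = ![(3:ℝ),4,2] i := mdev_t1 i F1 (mdev_refl i F1)
  show ∑ j : Fin 2, ![(1:ℝ),0] j * mpayoff _ i = _
  rw [Fin.sum_univ_two]
  show 1 * mpayoff F1 i + 0 * mpayoff (MixedProfile.leaf (u := ![3,3,3])) i = _
  rw [e1]; ring

theorem mspe_f5 : MixedSPE F5 := by
  refine ⟨?_, ?_⟩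
  · intro j
    fin_cases j
    · exact mspe_f1
    · trivial
  · intro i f' hdev
    cases f' with
    | node w hw hs sub =>
      show mpayoff (MixedProfile.node w hw hs sub) i ≤ mpayoff F5 i
      obtain ⟨h1, h2⟩ := hdev
      have e1 : mpayoff (sub 0) i = ![(3:ℝ),4,2] i := mdev_t1 i (sub 0) (h2 0)
      have e : mpayoff (MixedProfile.node (p := 0) w hw hs sub) i
          = w 0 * ![(3:ℝ),4,2] i + w 1 * ![(3:ℝ),3,3] i := by
        show ∑ j : Fin 2, w j * mpayoff (sub j) i = _
        erw [Fin.sum_univ_two, e1, mpayoff_leaf ![3,3,3] (sub 1)]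
      rw [e, mpayoff_f5 i]
      have hsum : w 0 + w 1 = 1 := by rw [← Fin.sum_univ_two w]; exact hs
      fin_cases i
      · simp; linarith
      · rw [h1 (by decide)]; norm_num
      · rw [h1 (by decide)]; norm_num

theorem pvals_t2 (g : PureProfile T2) :
    (payoff g 0 = 8 ∧ payoff g 1 = 0) ∨ (payoff g 0 = 0 ∧ payoff g 1 = 8) := by
  cases g with
  | node ch sub =>
    fin_cases ch
    · left
      constructor
      · show payoff (sub 0) 0 = 8
        erw [payoff_leaf ![8,0,1] (sub 0)]; norm_num
      · show payoff (sub 0) 1 = 0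
        erw [payoff_leaf ![8,0,1] (sub 0)]; norm_num
    · right
      constructor
      · show payoff (sub 1) 0 = 0
        erw [payoff_leaf ![0,8,1] (sub 1)]; norm_num
      · show payoff (sub 1) 1 = 8
        erw [payoff_leaf ![0,8,1] (sub 1)]; norm_num

theorem spe_t1 (g : PureProfile T1) (h : IsSPE g) : payoff g 0 ≤ 2 := by
  cases g with
  | node a sub =>
    obtain ⟨hsub, hcond⟩ := h
    fin_cases a
    · rcases pvals_t2 (sub 0) with ⟨e0, e1⟩ | ⟨e0, e1⟩
      · exfalso
        have hdev : Dev 1 (PureProfile.node (p := 1) 0 sub) (PureProfile.node (p := 1) 1 sub) :=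
          ⟨fun hne => absurd rfl hne, fun j => dev_refl 1 (sub j)⟩
        have key : payoff (sub 1) 1 ≤ payoff (sub 0) 1 :=
          hcond 1 (PureProfile.node (p := 1) 1 sub) hdev
        erw [payoff_leaf ![2,4,3] (sub 1), e1] at key
        norm_num at key
      · show payoff (sub 0) 0 ≤ 2
        erw [e0]; norm_num
    · show payoff (sub 1) 0 ≤ 2
      erw [payoff_leaf ![2,4,3] (sub 1)]; norm_num

theorem stmt9 :
    FixedSum G5 9 ∧
      ∃ f : MixedProfile G5, MixedSPE f ∧
        ∀ g : PureProfile G5, InSupport f g → ¬ IsSPE g := by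
  constructor
  · intro v hv
    obtain ⟨j, hj⟩ := hv
    fin_cases j
    · obtain ⟨j2, hj2⟩ := hj
      fin_cases j2
      · obtain ⟨j3, hj3⟩ := hj2
        fin_cases j3
        · obtain rfl : ![(8:ℝ),0,1] = v := hj3
          rw [Fin.sum_univ_three]; norm_num [Matrix.cons_val_two]
        · obtain rfl : ![(0:ℝ),8,1] = v := hj3
          rw [Fin.sum_univ_three]; norm_num [Matrix.cons_val_two]
      · obtain rfl : ![(2:ℝ),4,3] = v := hj2
        rw [Fin.sum_univ_three]; norm_num [Matrix.cons_val_two]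
    · obtain rfl : ![(3:ℝ),3,3] = v := hj
      rw [Fin.sum_univ_three]; norm_num [Matrix.cons_val_two]
  · refine ⟨F5, mspe_f5, ?_⟩
    intro g hsup hspe
    cases g with
    | node ch sub =>
      obtain ⟨hpos, hsub⟩ := hsup
      obtain ⟨hall, hcond⟩ := hspe
      fin_cases ch
      · have hle : payoff (sub 0) 0 ≤ 2 := spe_t1 (sub 0) (hall 0)
        have hdev : Dev 0 (PureProfile.node (p := 0) 0 sub) (PureProfile.node (p := 0) 1 sub) :=
          ⟨fun hne => absurd rfl hne, fun j => dev_refl 0 (sub j)⟩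
        have key : payoff (sub 1) 0 ≤ payoff (sub 0) 0 :=
          hcond 0 (PureProfile.node (p := 0) 1 sub) hdev
        erw [payoff_leaf ![3,3,3] (sub 1)] at key
        norm_num at key
        linarith
      · have : (0:ℝ) < 0 := hpos
        linarith
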